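/- An n×T real matrix Y satisfies both the cross-sectional constraints UᵀY = 0 and the temporal constraints YZ = 0 if and only if Y lies in the linear span of the rank-one matrices s·tᵀ with s ∈ ℝⁿ, t ∈ ℝ^T satisfying Uᵀs = 0 and Zᵀt = 0. Equivalently, the cross-temporally coherent subspace is the tensor product of the cross-sectionally coherent subspace ker(Uᵀ) and the temporally coherent subspace ker(Zᵀ). -/

import Mathlib

open Matrix

/-- an n×T matrix Y is cross-temporally coherent (UᵀY = 0 and
YZ = 0) iff it lies in the span of the rank-one matrices s·tᵀ with Uᵀs = 0 and
Zᵀt = 0, i.e. the coherent subspace is the tensor product ker(Uᵀ) ⊗ ker(Zᵀ). -/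
theorem stmt_6 {n na T k : ℕ}
    (U : Matrix (Fin n) (Fin na) ℝ) (Z : Matrix (Fin T) (Fin k) ℝ)
    (Y : Matrix (Fin n) (Fin T) ℝ) :
    (Uᵀ * Y = 0 ∧ Y * Z = 0) ↔
      Y ∈ Submodule.span ℝ
        {A : Matrix (Fin n) (Fin T) ℝ |
          ∃ (s : Fin n → ℝ) (t : Fin T → ℝ),
            Uᵀ.mulVec s = 0 ∧ Zᵀ.mulVec t = 0 ∧ A = vecMulVec s t} := by
  constructor
  · rintro ⟨hU, hZ⟩
    set K := LinearMap.ker (Matrix.mulVecLin Uᵀ) with hKdef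
    have hcol : ∀ j, (fun x => Y x j) ∈ K := by
      intro j
      simp only [hKdef, LinearMap.mem_ker, Matrix.mulVecLin_apply]
      funext a
      have h := congrFun (congrFun hU a) j
      simpa [Matrix.mul_apply, Matrix.mulVec, dotProduct] using h
    let col : Fin T → K := fun j => ⟨fun x => Y x j, hcol j⟩
    let b := Module.finBasis ℝ K
    let c : Fin (Module.finrank ℝ K) → Fin T → ℝ := fun i j => b.repr (col j) i
    have hY : Y = ∑ i, vecMulVec (fun x => (b i : Fin n → ℝ) x) (c i) := by
      ext x j
      have h1 : (∑ i, c i j • (b i : K)) = col j := b.sum_repr (col j)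
      have h2 := congrArg (fun (v : K) => (v : Fin n → ℝ) x) h1
      simp only [Submodule.coe_sum, Submodule.coe_smul] at h2
      simp only [Finset.sum_apply, Pi.smul_apply, smul_eq_mul] at h2
      simp only [Matrix.sum_apply, vecMulVec_apply]
      refine h2.symm.trans ?_
      exact Finset.sum_congr rfl fun i _ => mul_comm _ _
    have hc : ∀ i, Zᵀ.mulVec (c i) = 0 := by
      intro i
      funext a
      have hv : (∑ j, Z j a • col j) = (0 : K) := by
        apply Subtype.ext
        simp only [Submodule.coe_sum, Submodule.coe_smul, ZeroMemClass.coe_zero]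
        funext x
        have h := congrFun (congrFun hZ x) a
        simp only [Matrix.mul_apply, Matrix.zero_apply] at h
        simp only [Finset.sum_apply, Pi.smul_apply, smul_eq_mul, Pi.zero_apply]
        rw [← h]
        exact Finset.sum_congr rfl fun j _ => mul_comm _ _
      have h3 := congrArg (fun v => b.repr v i) hv
      simp only [map_sum, _root_.map_smul, Finsupp.coe_smul, Pi.smul_apply, smul_eq_mul,
        map_zero, Finsupp.coe_zero, Pi.zero_apply, Finsupp.coe_finset_sum,
        Finset.sum_apply] at h3
      simp only [Matrix.mulVec, dotProduct, Matrix.transpose_apply, Pi.zero_apply]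
      rw [← h3]
    rw [hY]
    apply Submodule.sum_mem
    intro i _
    apply Submodule.subset_span
    refine ⟨fun x => (b i : Fin n → ℝ) x, c i, ?_, hc i, rfl⟩
    exact LinearMap.mem_ker.mp (b i).2
  · intro hY
    have hle : Submodule.span ℝ
        {A : Matrix (Fin n) (Fin T) ℝ |
          ∃ (s : Fin n → ℝ) (t : Fin T → ℝ),
            Uᵀ.mulVec s = 0 ∧ Zᵀ.mulVec t = 0 ∧ A = vecMulVec s t} ≤
        ({ carrier := {A | Uᵀ * A = 0 ∧ A * Z = 0},
           add_mem' := by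
             rintro A B ⟨hA1, hA2⟩ ⟨hB1, hB2⟩
             constructor
             · rw [Matrix.mul_add, hA1, hB1, add_zero]
             · rw [Matrix.add_mul, hA2, hB2, add_zero]
           zero_mem' := by constructor <;> simp
           smul_mem' := by
             rintro r A ⟨hA1, hA2⟩
             constructor
             · rw [Matrix.mul_smul, hA1, smul_zero]
             · rw [Matrix.smul_mul, hA2, smul_zero] } :
          Submodule ℝ (Matrix (Fin n) (Fin T) ℝ)) := by
      rw [Submodule.span_le]
      rintro A ⟨s, t, hs, ht, rfl⟩
      constructor
      · ext a j
        have h := congrFun hs a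
        simp only [Matrix.mulVec, dotProduct, Pi.zero_apply] at h
        simp only [Matrix.mul_apply, vecMulVec_apply, Matrix.zero_apply]
        calc (∑ x, Uᵀ a x * (s x * t j)) = (∑ x, Uᵀ a x * s x) * t j := by
              rw [Finset.sum_mul]; exact Finset.sum_congr rfl fun x _ => (mul_assoc _ _ _).symm
          _ = 0 := by rw [h, zero_mul]
      · ext x a
        have h := congrFun ht a
        simp only [Matrix.mulVec, dotProduct, Matrix.transpose_apply, Pi.zero_apply] at h
        simp only [Matrix.mul_apply, vecMulVec_apply, Matrix.zero_apply]
        calc (∑ j, s x * t j * Z j a) = s x * ∑ j, Z j a * t j := by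
              rw [Finset.mul_sum]; exact Finset.sum_congr rfl fun j _ => by ring
          _ = 0 := by rw [h, mul_zero]
    exact hle hY
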